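/- For integers n ≥ 0, m ≥ 2, r ≥ 1, the 3-variable truncated exponential-Gould-Hopper polynomial _eH_n^{(m,r)}(x,y,z), defined by the generating function e^{xt+yt^m}/(1-z t^r) = Σ_{n≥0} _eH_n^{(m,r)}(x,y,z) t^n/n!, satisfies the double-sum expansion _eH_n^{(m,r)}(x,y,z) = n! Σ_{k=0}^{⌊n/r⌋} Σ_{l=0}^{⌊(n-rk)/m⌋} z^k x^{n-rk-ml} y^l / (l! (n-rk-ml)!). -/

import Mathlib

open scoped BigOperators

/-- The exponential series `e^{xt}` in `ℝ[[t]]`. -/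
noncomputable def expPS (x : ℝ) : PowerSeries ℝ :=
  PowerSeries.mk fun n => x ^ n / n.factorial

/-- The series `e^{y t^m} = ∑_k y^k t^{mk}/k!` in `ℝ[[t]]`. -/
noncomputable def expMonPS (y : ℝ) (m : ℕ) : PowerSeries ℝ :=
  PowerSeries.mk fun n => if m ∣ n then y ^ (n / m) / (n / m).factorial else 0

lemma coeff_prod_exp (m : ℕ) (hm : 1 ≤ m) (x y : ℝ) (n : ℕ) :
    PowerSeries.coeff n (expPS x * expMonPS y m) =
      ∑ l ∈ Finset.range (n / m + 1),
        x ^ (n - m * l) * y ^ l / (l.factorial * (n - m * l).factorial) := by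
  rw [PowerSeries.coeff_mul, Finset.Nat.sum_antidiagonal_eq_sum_range_succ_mk]
  simp only [expPS, expMonPS, PowerSeries.coeff_mk]
  have h1 : ∀ i ∈ Finset.range (n + 1),
      x ^ i / i.factorial * (if m ∣ n - i then y ^ ((n - i) / m) / ((n - i) / m).factorial else 0)
      = (fun j => if m ∣ j then x ^ (n - j) * y ^ (j / m) /
          ((j / m).factorial * (n - j).factorial) else 0) (n - i) := by
    intro i hi
    have hi' : i ≤ n := Nat.lt_succ_iff.mp (Finset.mem_range.mp hi)
    simp only [Nat.sub_sub_self hi']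
    split_ifs with h
    · rw [div_mul_div_comm, mul_comm ((i.factorial : ℝ))]
    · simp
  rw [Finset.sum_congr rfl h1]
  have h2 : ∑ i ∈ Finset.range (n + 1),
      (fun j => if m ∣ j then x ^ (n - j) * y ^ (j / m) /
          ((j / m).factorial * (n - j).factorial) else 0) (n - i)
      = ∑ j ∈ Finset.range (n + 1), (if m ∣ j then x ^ (n - j) * y ^ (j / m) /
          ((j / m).factorial * (n - j).factorial) else 0) := by
    have := Finset.sum_range_reflect (fun j => if m ∣ j then x ^ (n - j) * y ^ (j / m) /
          ((j / m).factorial * (n - j).factorial) else 0) (n + 1)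
    simpa using this
  rw [h2, ← Finset.sum_filter]
  refine Finset.sum_nbij' (fun j => j / m) (fun l => m * l) ?_ ?_ ?_ ?_ ?_
  · intro a ha
    simp only [Finset.mem_filter, Finset.mem_range] at ha
    exact Finset.mem_range.mpr (Nat.lt_succ_of_le (Nat.div_le_div_right (Nat.lt_succ_iff.mp ha.1)))
  · intro a ha
    simp only [Finset.mem_range] at ha
    refine Finset.mem_filter.mpr ⟨Finset.mem_range.mpr (Nat.lt_succ_of_le ?_), ⟨a, rfl⟩⟩
    have h := (Nat.le_div_iff_mul_le hm).mp (Nat.lt_succ_iff.mp ha)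
    simpa [mul_comm] using h
  · intro a ha
    simp only [Finset.mem_filter] at ha
    exact Nat.mul_div_cancel' ha.2
  · intro a _
    exact Nat.mul_div_cancel_left a hm
  · intro a ha
    simp only [Finset.mem_filter] at ha
    simp only [Nat.mul_div_cancel' ha.2]

noncomputable def Sfun (m r : ℕ) (x y z : ℝ) (n : ℕ) : ℝ :=
  ∑ k ∈ Finset.range (n / r + 1), ∑ l ∈ Finset.range ((n - r * k) / m + 1),
    z ^ k * x ^ (n - r * k - m * l) * y ^ l /
      (l.factorial * (n - r * k - m * l).factorial)

lemma Sfun_rec (m r : ℕ) (hr : 1 ≤ r) (x y z : ℝ) (n : ℕ) :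
    Sfun m r x y z n - z * (if r ≤ n then Sfun m r x y z (n - r) else 0) =
      ∑ l ∈ Finset.range (n / m + 1),
        x ^ (n - m * l) * y ^ l / (l.factorial * (n - m * l).factorial) := by
  by_cases h : r ≤ n
  · rw [if_pos h, Sfun, Nat.div_eq_sub_div hr h, Finset.sum_range_succ' _ ((n - r) / r + 1)]
    simp only [pow_zero, one_mul, Nat.mul_zero, Nat.sub_zero]
    have hk : ∀ k, ∑ l ∈ Finset.range ((n - r * (k + 1)) / m + 1),
        z ^ (k + 1) * x ^ (n - r * (k + 1) - m * l) * y ^ l /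
          (l.factorial * (n - r * (k + 1) - m * l).factorial)
        = z * ∑ l ∈ Finset.range ((n - r - r * k) / m + 1),
        z ^ k * x ^ (n - r - r * k - m * l) * y ^ l /
          (l.factorial * (n - r - r * k - m * l).factorial) := by
      intro k
      have he : n - r * (k + 1) = n - r - r * k := by
        have : r * (k + 1) = r + r * k := by ring
        omega
      rw [he, Finset.mul_sum]
      refine Finset.sum_congr rfl fun l _ => ?_
      rw [pow_succ, mul_comm (z ^ k) z]
      ring
    rw [Finset.sum_congr rfl fun k _ => hk k, ← Finset.mul_sum, ← Sfun]
    ring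
  · rw [if_neg h, Sfun, Nat.div_eq_of_lt (by omega), mul_zero, sub_zero]
    simp


/-- Double-sum expansion of the 3-variable truncated exponential-Gould-Hopper
polynomials `_eH_n^{(m,r)}(x,y,z)` with EGF `e^{xt+yt^m}/(1-z t^r)` (denominator cleared). -/
theorem tegh_explicit (m r : ℕ) (hm : 2 ≤ m) (hr : 1 ≤ r) (x y z : ℝ) (EH : ℕ → ℝ)
    (hEH : PowerSeries.mk (fun n => EH n / n.factorial) *
        (1 - PowerSeries.C z * PowerSeries.X ^ r) = expPS x * expMonPS y m)
    (n : ℕ) :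
    EH n = n.factorial *
      ∑ k ∈ Finset.range (n / r + 1), ∑ l ∈ Finset.range ((n - r * k) / m + 1),
        z ^ k * x ^ (n - r * k - m * l) * y ^ l /
          (l.factorial * (n - r * k - m * l).factorial) := by
  have hm1 : 1 ≤ m := by omega
  have hS : PowerSeries.mk (Sfun m r x y z) *
      (1 - PowerSeries.C z * PowerSeries.X ^ r) = expPS x * expMonPS y m := by
    ext j
    rw [coeff_prod_exp m hm1 x y j, ← Sfun_rec m r hr x y z j]
    rw [mul_sub, mul_one, map_sub, PowerSeries.coeff_mk, mul_left_comm,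
      PowerSeries.coeff_C_mul, PowerSeries.coeff_mul_X_pow', PowerSeries.coeff_mk]
  have hu : (1 - PowerSeries.C z * PowerSeries.X ^ r : PowerSeries ℝ) ≠ 0 := by
    intro h
    have := congrArg (PowerSeries.constantCoeff) h
    simp [zero_pow (by omega : r ≠ 0)] at this
  have heq : PowerSeries.mk (fun n => EH n / n.factorial) = PowerSeries.mk (Sfun m r x y z) :=
    mul_right_cancel₀ hu (hEH.trans hS.symm)
  have hc := congrArg (PowerSeries.coeff n) heq
  rw [PowerSeries.coeff_mk, PowerSeries.coeff_mk] at hc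
  have hfac : (n.factorial : ℝ) ≠ 0 := Nat.cast_ne_zero.mpr n.factorial_ne_zero
  rw [← Sfun]
  rw [← hc, mul_div_cancel₀ (EH n) hfac]
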